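/- In the Euclidean plane, a point can serve as the nearest neighbor of at most 6 other points when all pairwise distances are distinct; i.e., the in-degree of every vertex of the nearest-neighbor digraph is at most 6 (so Q_l = 0 for l > 6). -/

import Mathlib

open scoped Classical

open Real Complex

private noncomputable def toC (p : EuclideanSpace ℝ (Fin 2)) : ℂ := ⟨p 0, p 1⟩

private lemma toC_dist (p q : EuclideanSpace ℝ (Fin 2)) : dist (toC p) (toC q) = dist p q := by
  rw [Complex.dist_eq_re_im, EuclideanSpace.dist_eq]
  simp [toC, Fin.sum_univ_two, Real.dist_eq, sq_abs]

private lemma re_mul_conj (z w : ℂ) :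
    (z * (starRingEnd ℂ) w).re = ‖z‖ * ‖w‖ * Real.cos (z.arg - w.arg) := by
  rcases eq_or_ne z 0 with rfl | hz
  · simp
  rcases eq_or_ne w 0 with rfl | hw
  · simp
  have hz' : (‖z‖) ≠ 0 := by simpa using hz
  have hw' : (‖w‖) ≠ 0 := by simpa using hw
  rw [Real.cos_sub, Complex.cos_arg hz, Complex.cos_arg hw, Complex.sin_arg, Complex.sin_arg]
  simp only [Complex.mul_re, Complex.conj_re, Complex.conj_im]
  field_simp
  ring

private lemma dist_sq_eq (z w : ℂ) :
    dist z w ^ 2 = ‖z‖ ^ 2 + ‖w‖ ^ 2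
      - 2 * ‖z‖ * ‖w‖ * Real.cos (z.arg - w.arg) := by
  rw [Complex.dist_eq, Complex.sq_norm, Complex.normSq_sub, ← Complex.sq_norm z,
    ← Complex.sq_norm w, re_mul_conj]
  ring

private lemma cos_half_of_same_sector {θ₁ θ₂ : ℝ}
    (h1 : θ₁ ∈ Set.Ioc (-π) π) (h2 : θ₂ ∈ Set.Ioc (-π) π)
    (hk : ((⌊θ₁ * 3 / π⌋ : ℤ) : ZMod 6) = ((⌊θ₂ * 3 / π⌋ : ℤ) : ZMod 6)) :
    (1 : ℝ) / 2 ≤ Real.cos (θ₁ - θ₂) := by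
  have hπ : (0:ℝ) < π := Real.pi_pos
  have key : ∀ t : ℝ, |t| ≤ π / 3 → (1:ℝ)/2 ≤ Real.cos t := by
    intro t ht
    rw [← Real.cos_abs t, ← Real.cos_pi_div_three]
    exact Real.cos_le_cos_of_nonneg_of_le_pi (abs_nonneg t) (by linarith) ht
  have floor_bounds : ∀ θ : ℝ, (⌊θ * 3 / π⌋ : ℝ) * (π/3) ≤ θ ∧ θ < ((⌊θ * 3 / π⌋ : ℝ) + 1) * (π/3) := by
    intro θ
    constructor
    · have h := Int.floor_le (θ * 3 / π)
      calc (⌊θ * 3 / π⌋ : ℝ) * (π/3) ≤ (θ * 3 / π) * (π/3) := by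
            apply mul_le_mul_of_nonneg_right h; positivity
        _ = θ := by field_simp
    · have h := Int.lt_floor_add_one (θ * 3 / π)
      calc θ = (θ * 3 / π) * (π/3) := by field_simp
        _ < ((⌊θ * 3 / π⌋ : ℝ) + 1) * (π/3) := by
            apply mul_lt_mul_of_pos_right h; positivity
  set k₁ := ⌊θ₁ * 3 / π⌋ with hk1
  set k₂ := ⌊θ₂ * 3 / π⌋ with hk2
  have hb1l : (-3:ℝ) < θ₁ * 3 / π := by rw [lt_div_iff₀ hπ]; nlinarith [h1.1]
  have hb1u : θ₁ * 3 / π ≤ 3 := by rw [div_le_iff₀ hπ]; nlinarith [h1.2]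
  have hb2l : (-3:ℝ) < θ₂ * 3 / π := by rw [lt_div_iff₀ hπ]; nlinarith [h2.1]
  have hb2u : θ₂ * 3 / π ≤ 3 := by rw [div_le_iff₀ hπ]; nlinarith [h2.2]
  have hk1l : -3 ≤ k₁ := Int.le_floor.2 (by push_cast; linarith)
  have hk1u : k₁ ≤ 3 := by
    have := Int.floor_le_floor (R := ℝ) hb1u
    simpa using this
  have hk2l : -3 ≤ k₂ := Int.le_floor.2 (by push_cast; linarith)
  have hk2u : k₂ ≤ 3 := by
    have := Int.floor_le_floor (R := ℝ) hb2u
    simpa using this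
  have hdvd : (6 : ℤ) ∣ k₂ - k₁ := by
    rwa [ZMod.intCast_eq_intCast_iff_dvd_sub] at hk
  obtain ⟨hf1l, hf1u⟩ := floor_bounds θ₁
  obtain ⟨hf2l, hf2u⟩ := floor_bounds θ₂
  rw [← hk1] at hf1l hf1u
  rw [← hk2] at hf2l hf2u
  obtain ⟨c, hc⟩ := hdvd
  rcases (by omega : k₁ = k₂ ∨ (k₁ = 3 ∧ k₂ = -3) ∨ (k₁ = -3 ∧ k₂ = 3)) with h | ⟨ha, hb⟩ | ⟨ha, hb⟩
  · apply key
    rw [abs_le]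
    rw [h] at hf1l hf1u
    constructor <;> nlinarith
  · rw [ha] at hf1l; rw [hb] at hf2u
    have hθ₁ : θ₁ = π := le_antisymm h1.2 (by push_cast at hf1l; linarith)
    rw [← Real.cos_sub_two_pi]
    apply key
    rw [abs_le]
    push_cast at hf2u
    constructor <;> nlinarith [h2.1]
  · rw [ha] at hf1u; rw [hb] at hf2l
    have hθ₂ : θ₂ = π := le_antisymm h2.2 (by push_cast at hf2l; linarith)
    rw [show θ₁ - θ₂ = -(θ₂ - θ₁) from by ring, Real.cos_neg, ← Real.cos_sub_two_pi]
    apply key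
    rw [abs_le]
    push_cast at hf1u
    constructor <;> nlinarith [h1.1]

/-- In the Euclidean plane with distinct pairwise distances, a point `v` can serve as the
nearest neighbor of at most 6 other points: the in-degree of every vertex of the
nearest-neighbor digraph is at most 6. -/
theorem nn_indegree_le_six
    (s : Finset (EuclideanSpace ℝ (Fin 2)))
    (hdist : ∀ x ∈ s, ∀ y ∈ s, ∀ x' ∈ s, ∀ y' ∈ s,
      x ≠ y → x' ≠ y' → dist x y = dist x' y' →
        ({x, y} : Set (EuclideanSpace ℝ (Fin 2))) = {x', y'})
    (v : EuclideanSpace ℝ (Fin 2)) (hv : v ∈ s) :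
    (s.filter fun x => x ≠ v ∧ ∀ z ∈ s, z ≠ x → dist x v ≤ dist x z).card ≤ 6 := by
  by_contra hcard
  push_neg at hcard
  set T := s.filter fun x => x ≠ v ∧ ∀ z ∈ s, z ≠ x → dist x v ≤ dist x z with hT
  -- pigeonhole into 6 angular sectors
  have hmaps : ∀ x ∈ T, ((((⌊(toC x - toC v).arg * 3 / π⌋ : ℤ) : ZMod 6)) ∈ (Finset.univ : Finset (ZMod 6))) :=
    fun _ _ => Finset.mem_univ _
  have hlt : (Finset.univ : Finset (ZMod 6)).card < T.card := by
    simpa using hcard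
  obtain ⟨x, hx, y, hy, hxy, hginj⟩ :=
    Finset.exists_ne_map_eq_of_card_lt_of_maps_to hlt hmaps
  -- unpack membership
  rw [hT, Finset.mem_filter] at hx hy
  obtain ⟨hxs, hxv, hxnn⟩ := hx
  obtain ⟨hys, hyv, hynn⟩ := hy
  -- key facts about distances
  have hsetne : ∀ p q r : EuclideanSpace ℝ (Fin 2), p ≠ q → p ≠ r →
      ({p, q} : Set _) ≠ {p, r} ∨ q = r := by
    intro p q r hpq hpr
    by_cases h : q = r
    · right; exact h
    · left
      intro heq
      have : r ∈ ({p, q} : Set _) := heq ▸ (by simp : r ∈ ({p, r} : Set _))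
      rcases this with h' | h'
      · exact hpr h'.symm
      · exact h h'.symm
  -- dist x v ≠ dist y v
  have hab : dist x v ≠ dist y v := by
    intro h
    have := hdist x hxs v hv y hys v hv hxv hyv h
    have : y ∈ ({x, v} : Set _) := this ▸ (by simp : y ∈ ({y, v} : Set _))
    rcases this with h' | h'
    · exact hxy (h'.symm)
    · exact hyv h'
  -- dist x v < dist x y
  have haxy : dist x v < dist x y := by
    have hle : dist x v ≤ dist x y := hxnn y hys (Ne.symm hxy)
    rcases lt_or_eq_of_le hle with h | h
    · exact h
    have := hdist x hxs v hv x hxs y hys hxv (Ne.symm (Ne.symm hxy)) h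
    have : y ∈ ({x, v} : Set _) := this ▸ (by simp : y ∈ ({x, y} : Set _))
    rcases this with h' | h'
    · exact absurd h'.symm hxy
    · exact absurd h' hyv
  -- dist y v < dist y x
  have hbxy : dist y v < dist x y := by
    have hle : dist y v ≤ dist y x := hynn x hxs hxy
    rw [dist_comm y x] at hle
    rcases lt_or_eq_of_le hle with h | h
    · exact h
    rw [dist_comm x y] at h
    have := hdist y hys v hv y hys x hxs hyv (Ne.symm hxy) h
    have : x ∈ ({y, v} : Set _) := this ▸ (by simp : x ∈ ({y, x} : Set _))
    rcases this with h' | h'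
    · exact absurd h' hxy
    · exact absurd h' hxv
  -- positive distances
  have ha0 : 0 < dist x v := dist_pos.2 hxv
  have hb0 : 0 < dist y v := dist_pos.2 hyv
  -- set up complex vectors
  set z := toC x - toC v with hz
  set w := toC y - toC v with hw
  have habs_z : ‖z‖ = dist x v := by
    rw [hz, ← Complex.dist_eq, toC_dist]
  have habs_w : ‖w‖ = dist y v := by
    rw [hw, ← Complex.dist_eq, toC_dist]
  have hdxy : dist x y = dist z w := by
    rw [hz, hw, dist_sub_right (toC x) (toC y) (toC v)]
    rw [toC_dist]
  -- cosine bound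
  have hcos : (1:ℝ)/2 ≤ Real.cos (z.arg - w.arg) := by
    apply cos_half_of_same_sector
    · exact ⟨Complex.neg_pi_lt_arg z, Complex.arg_le_pi z⟩
    · exact ⟨Complex.neg_pi_lt_arg w, Complex.arg_le_pi w⟩
    · exact hginj
  -- law of cosines contradiction
  have hlaw := dist_sq_eq z w
  rw [habs_z, habs_w] at hlaw
  set a := dist x v
  set b := dist y v
  have h1 : dist z w ^ 2 ≤ a^2 + b^2 - a * b := by
    nlinarith [hcos, mul_pos ha0 hb0]
  rcases lt_or_gt_of_ne hab with h | h
  · -- a < b, so dist x y ^ 2 < b^2 but b < dist x y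
    have : dist x y ^ 2 < b ^ 2 := by rw [hdxy]; nlinarith
    nlinarith
  · have : dist x y ^ 2 < a ^ 2 := by rw [hdxy]; nlinarith
    nlinarith
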